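/- Let P = { y in R^3 : A y ≤ b } be a polytope (A an n×3 matrix, b in R^n) and let ℓ = N_{p,r}(x,d,l,u) be a finite needle with p ≥ 1, r > 0, and let ε > 0. Suppose there exist w^1 in R^n with w^1 ≥ 0, w^2 in R^3, and nonnegative scalars w^3, w^4, w^5 satisfying: b·w^1 + x·w^2 - l w^3 + u w^4 + r w^5 ≤ -ε; Aᵀ w^1 + w^2 = 0; -d·w^2 - w^3 + w^4 = 0; ||w^2||_q ≤ w^5 (where 1/p + 1/q = 1). Then ℓ ∩ P = ∅. -/

import Mathlib

open scoped ENNReal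

/-- The `p`-norm of a vector in ℝ³, with `p = ∞` allowed. -/
noncomputable def pnorm (p : ℝ≥0∞) (v : Fin 3 → ℝ) : ℝ :=
  if p = ⊤ then max (max |v 0| |v 1|) |v 2|
  else (∑ i, |v i| ^ p.toReal) ^ (1 / p.toReal)

/-- The needle `N_{p,r}(x,d,l,u)`. -/
def needle (p : ℝ≥0∞) (r : ℝ) (x d : Fin 3 → ℝ) (l u : ℝ) : Set (Fin 3 → ℝ) :=
  {χ | ∃ τ ρ, l ≤ τ ∧ τ ≤ u ∧ pnorm p ρ ≤ r ∧ χ = x + τ • d + ρ}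

/-- Euclidean inner product on ℝ³. -/
def dot (v w : Fin 3 → ℝ) : ℝ :=
  ∑ i, v i * w i

lemma pnorm_nonneg (p : ℝ≥0∞) (v : Fin 3 → ℝ) : 0 ≤ pnorm p v := by
  unfold pnorm
  split
  · positivity
  · positivity

lemma holder_top_one (v w : Fin 3 → ℝ) : dot v w ≤ pnorm ⊤ v * pnorm 1 w := by
  have hbound : ∀ i : Fin 3, |v i| ≤ pnorm ⊤ v := by
    intro i
    fin_cases i <;> simp [pnorm, le_max_iff, le_abs_self]
  have h0 := hbound 0; have h1 := hbound 1; have h2 := hbound 2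
  have hw : pnorm 1 w = |w 0| + |w 1| + |w 2| := by
    simp [pnorm, Fin.sum_univ_three]
  have key : ∀ i : Fin 3, v i * w i ≤ pnorm ⊤ v * |w i| := by
    intro i
    calc v i * w i ≤ |v i * w i| := le_abs_self _
    _ = |v i| * |w i| := abs_mul _ _
    _ ≤ pnorm ⊤ v * |w i| := by
        exact mul_le_mul_of_nonneg_right (hbound i) (abs_nonneg _)
  have k0 := key 0; have k1 := key 1; have k2 := key 2
  simp only [dot, Fin.sum_univ_three, hw]
  nlinarith

lemma holder (p q : ℝ≥0∞) (hp : 1 ≤ p) (hq : 1 ≤ q) (hpq : 1 / p + 1 / q = 1)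
    (v w : Fin 3 → ℝ) : dot v w ≤ pnorm p v * pnorm q w := by
  have hp0 : p ≠ 0 := by intro h; simp [h] at hp
  have hq0 : q ≠ 0 := by intro h; simp [h] at hq
  simp only [one_div] at hpq
  rcases eq_or_ne p ⊤ with hpt | hpt
  · have hq1 : q = 1 := by
      rw [hpt] at hpq
      simp at hpq
      simpa [inv_eq_one] using hpq
    rw [hpt, hq1]; exact holder_top_one v w
  rcases eq_or_ne q ⊤ with hqt | hqt
  · have hp1 : p = 1 := by
      rw [hqt] at hpq
      simp at hpq
      simpa [inv_eq_one] using hpq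
    rw [hp1, hqt]
    have := holder_top_one w v
    have hd : dot v w = dot w v := by simp [dot, Fin.sum_univ_three]; ring
    rw [hd]; linarith [this]
  · -- both finite
    have hp1 : 1 < p := by
      rcases lt_or_eq_of_le hp with h | h
      · exact h
      · exfalso; rw [← h] at hpq; simp at hpq
        have : q⁻¹ = 0 := by
          by_contra hne
          have h1 : (0:ℝ≥0∞) < q⁻¹ := pos_iff_ne_zero.mpr hne
          have : (1:ℝ≥0∞) < 1 + q⁻¹ := ENNReal.lt_add_right (by simp) hne
          rw [hpq] at this
          simp at this
        exact hqt (ENNReal.inv_eq_zero.mp this)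
    have hpr : 1 < p.toReal := by
      rw [← ENNReal.toReal_one]
      exact ENNReal.toReal_lt_toReal (by simp) hpt |>.mpr hp1
    have hconj : Real.HolderConjugate p.toReal q.toReal := by
      constructor
      · have := congrArg ENNReal.toReal hpq
        rw [ENNReal.toReal_add (by simp [hp0]) (by simp [hq0])] at this
        simpa [ENNReal.toReal_inv, one_div] using this
      · linarith
      · exact ENNReal.toReal_pos hq0 hqt
    have := Real.inner_le_Lp_mul_Lq (Finset.univ) v w hconj
    simpa [dot, pnorm, hpt, hqt] using this

theorem needle_polytope_disjoint (n : ℕ) (A : Matrix (Fin n) (Fin 3) ℝ)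
    (b : Fin n → ℝ) (p q : ℝ≥0∞) (hp : 1 ≤ p) (hq : 1 ≤ q)
    (hpq : 1 / p + 1 / q = 1) (r : ℝ) (hr : 0 < r) (ε : ℝ) (hε : 0 < ε)
    (x d : Fin 3 → ℝ) (l u : ℝ) (hlu : l ≤ u)
    (w1 : Fin n → ℝ) (hw1 : ∀ k, 0 ≤ w1 k) (w2 : Fin 3 → ℝ)
    (w3 w4 w5 : ℝ) (hw3 : 0 ≤ w3) (hw4 : 0 ≤ w4) (hw5 : 0 ≤ w5)
    (hineq : (∑ k, b k * w1 k) + dot x w2 - l * w3 + u * w4 + r * w5 ≤ -ε)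
    (heqA : ∀ i, (∑ k, A k i * w1 k) + w2 i = 0)
    (heqd : -dot d w2 - w3 + w4 = 0)
    (hcone : pnorm q w2 ≤ w5) :
    needle p r x d l u ∩ {y : Fin 3 → ℝ | ∀ k, ∑ i, A k i * y i ≤ b k} = ∅ := by
  rw [Set.eq_empty_iff_forall_notMem]
  rintro y ⟨⟨τ, ρ, hlτ, hτu, hρ, hy⟩, hyP⟩
  -- nonnegative combination of slacks
  have h0 : 0 ≤ ∑ k, (b k - ∑ i, A k i * y i) * w1 k :=
    Finset.sum_nonneg fun k _ => mul_nonneg (by linarith [hyP k]) (hw1 k)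
  have hswap : ∑ k, (∑ i, A k i * y i) * w1 k = ∑ i, (∑ k, A k i * w1 k) * y i := by
    simp_rw [Finset.sum_mul]
    rw [Finset.sum_comm]
    exact Finset.sum_congr rfl fun i _ => Finset.sum_congr rfl fun k _ => by ring
  have h0' : 0 ≤ (∑ k, b k * w1 k) + ∑ i, w2 i * y i := by
    have expand : ∑ k, (b k - ∑ i, A k i * y i) * w1 k
        = (∑ k, b k * w1 k) - ∑ k, (∑ i, A k i * y i) * w1 k := by
      rw [← Finset.sum_sub_distrib]
      exact Finset.sum_congr rfl fun k _ => by ring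
    rw [expand, hswap] at h0
    have : ∑ i, (∑ k, A k i * w1 k) * y i = -∑ i, w2 i * y i := by
      rw [← Finset.sum_neg_distrib]
      refine Finset.sum_congr rfl fun i _ => ?_
      have hA : (∑ k, A k i * w1 k) = -w2 i := by linarith [heqA i]
      rw [hA]; ring
    rw [this] at h0
    linarith
  -- expand y
  have hyi : ∀ i, y i = x i + τ * d i + ρ i := by
    intro i; rw [hy]; simp
  have hdot : ∑ i, w2 i * y i = dot x w2 + τ * dot d w2 + dot ρ w2 := by
    simp only [dot, Fin.sum_univ_three, hyi]; ring
  have hhold : dot ρ w2 ≤ pnorm p ρ * pnorm q w2 := holder p q hp hq hpq ρ w2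
  have hprod : pnorm p ρ * pnorm q w2 ≤ r * w5 :=
    mul_le_mul (by linarith) hcone (pnorm_nonneg _ _) (by linarith)
  have hτ4 : τ * w4 ≤ u * w4 := mul_le_mul_of_nonneg_right hτu hw4
  have hτ3 : l * w3 ≤ τ * w3 := mul_le_mul_of_nonneg_right hlτ hw3
  have hd2 : dot d w2 = w4 - w3 := by linarith
  rw [hdot, hd2] at h0'
  nlinarith
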